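/- arXiv:1103.4351 — 4 statements merged into one kernel-verified Lean document; each statement's English description precedes it below -/
import Mathlib

section
/- For n > 3, every path of length 2 in the folded hypercube FQ_n is contained in exactly one 4-cycle. -/
def FQ (n : ℕ) : SimpleGraph (Fin n → ZMod 2) :=
  SimpleGraph.fromRel (fun x y => (∃ i, y = x + Pi.single i 1) ∨ y = x + 1)

variable {n : ℕ}

lemma z2self (a : ZMod 2) : a + a = 0 := by revert a; decide

lemma addself (f : Fin n → ZMod 2) : f + f = 0 := funext fun i => z2self (f i)

lemma flipeq {x y d : Fin n → ZMod 2} (h : x = y + d) : y = x + d := by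
  rw [h, add_assoc, addself, add_zero]

lemma adj_iff (x y : Fin n → ZMod 2) :
    (FQ n).Adj x y ↔ x ≠ y ∧ ((∃ i, y = x + Pi.single i 1) ∨ y = x + 1) := by
  simp only [FQ, SimpleGraph.fromRel_adj]
  constructor
  · rintro ⟨hne, h | h⟩
    · exact ⟨hne, h⟩
    · refine ⟨hne, ?_⟩
      rcases h with ⟨i, hi⟩ | h1
      · exact Or.inl ⟨i, flipeq hi⟩
      · exact Or.inr (flipeq h1)
  · rintro ⟨hne, h⟩
    exact ⟨hne, Or.inl h⟩

lemma single_inj {i j : Fin n} (h : (Pi.single i 1 : Fin n → ZMod 2) = Pi.single j 1) : i = j := by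
  by_contra hij
  have := congrFun h i
  simp [Pi.single_apply, hij] at this

lemma exists_other (hn : 3 < n) (i j k : Fin n) : ∃ m : Fin n, m ≠ i ∧ m ≠ j ∧ m ≠ k := by
  by_contra hcon
  push_neg at hcon
  have hsub : (Finset.univ : Finset (Fin n)) ⊆ {i, j, k} := by
    intro m _
    simp only [Finset.mem_insert, Finset.mem_singleton]
    by_cases h1 : m = i
    · exact Or.inl h1
    by_cases h2 : m = j
    · exact Or.inr (Or.inl h2)
    exact Or.inr (Or.inr (hcon m h1 h2))
  have h1 := Finset.card_le_card hsub
  have h2 : ({i, j, k} : Finset (Fin n)).card ≤ 3 := by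
    apply le_trans (Finset.card_insert_le _ _)
    have := Finset.card_insert_le j ({k} : Finset (Fin n))
    simp only [Finset.card_singleton] at this ⊢
    omega
  simp only [Finset.card_univ, Fintype.card_fin] at h1
  omega

lemma not_mixed (hn : 3 < n) {i j k : Fin n} (_hij : i ≠ j) :
    (Pi.single i 1 + Pi.single j 1 : Fin n → ZMod 2) ≠ Pi.single k 1 + 1 := by
  intro h
  obtain ⟨m, hmi, hmj, hmk⟩ := exists_other hn i j k
  have := congrFun h m
  simp [Pi.single_apply, hmi, hmj, hmk] at this

lemma key (hn : 3 < n) {a b c d : Fin n → ZMod 2}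
    (ha : (∃ i, a = Pi.single i 1) ∨ a = 1) (hb : (∃ i, b = Pi.single i 1) ∨ b = 1)
    (hc : (∃ i, c = Pi.single i 1) ∨ c = 1) (hd : (∃ i, d = Pi.single i 1) ∨ d = 1)
    (hab : a ≠ b) (hcd : c ≠ d) (h : a + b = c + d) :
    (c = a ∧ d = b) ∨ (c = b ∧ d = a) := by
  rcases ha with ⟨i, rfl⟩ | rfl
  · rcases hb with ⟨j, rfl⟩ | rfl
    · -- a = e_i, b = e_j
      have hij : i ≠ j := fun hh => hab (by rw [hh])
      rcases hc with ⟨k, rfl⟩ | rfl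
      · rcases hd with ⟨l, rfl⟩ | rfl
        · -- all singles
          have hkl : k ≠ l := fun hh => hcd (by rw [hh])
          by_cases hik : i = k
          · subst hik
            have := add_left_cancel h
            have hjl := single_inj this
            subst hjl
            exact Or.inl ⟨rfl, rfl⟩
          · by_cases hil : i = l
            · subst hil
              rw [add_comm (Pi.single k 1)] at h
              have := add_left_cancel h
              have hjk := single_inj this
              subst hjk
              exact Or.inr ⟨rfl, rfl⟩
            · exfalso
              have := congrFun h i
              simp [Pi.single_apply, hij, hik, hil] at this
        · exact absurd h (not_mixed hn hij)
      · rcases hd with ⟨k, rfl⟩ | rfl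
        · rw [add_comm (1 : Fin n → ZMod 2)] at h
          exact absurd h (not_mixed hn hij)
        · exact absurd rfl hcd
    · -- a = e_i, b = 1
      rcases hc with ⟨k, rfl⟩ | rfl
      · rcases hd with ⟨l, rfl⟩ | rfl
        · have hkl : k ≠ l := fun hh => hcd (by rw [hh])
          exact absurd h.symm (not_mixed hn hkl)
        · have := add_right_cancel h
          have hik := single_inj this
          subst hik
          exact Or.inl ⟨rfl, rfl⟩
      · rcases hd with ⟨l, rfl⟩ | rfl
        · rw [add_comm (1 : Fin n → ZMod 2)] at h
          have := add_right_cancel h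
          have hil := single_inj this
          subst hil
          exact Or.inr ⟨rfl, rfl⟩
        · exact absurd rfl hcd
  · rcases hb with ⟨j, rfl⟩ | rfl
    · -- a = 1, b = e_j
      rcases hc with ⟨k, rfl⟩ | rfl
      · rcases hd with ⟨l, rfl⟩ | rfl
        · have hkl : k ≠ l := fun hh => hcd (by rw [hh])
          rw [add_comm (1 : Fin n → ZMod 2)] at h
          exact absurd h.symm (not_mixed hn hkl)
        · rw [add_comm (1 : Fin n → ZMod 2)] at h
          have := add_right_cancel h
          have hjk := single_inj this
          subst hjk
          exact Or.inr ⟨rfl, rfl⟩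
      · rcases hd with ⟨l, rfl⟩ | rfl
        · have := add_left_cancel h
          have hjl := single_inj this
          subst hjl
          exact Or.inl ⟨rfl, rfl⟩
        · exact absurd rfl hcd
    · exact absurd rfl hab

lemma Pnz (hn : 3 < n) {d : Fin n → ZMod 2}
    (hd : (∃ i, d = Pi.single i 1) ∨ d = 1) : d ≠ 0 := by
  rcases hd with ⟨i, rfl⟩ | rfl
  · intro h
    have := congrFun h i
    simp [Pi.single_apply] at this
  · intro h
    have := congrFun h ⟨0, by omega⟩
    simp at this

/-- For n > 3, every 2-path u-v-w in FQ_n lies in exactly one 4-cycle,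
i.e. u and w have exactly one common neighbor other than v. -/
theorem fq_two_path_unique_four_cycle (n : ℕ) (hn : 3 < n)
    (u v w : Fin n → ZMod 2) (huw : u ≠ w)
    (hu : (FQ n).Adj v u) (hw : (FQ n).Adj v w) :
    ∃! x : Fin n → ZMod 2, x ≠ v ∧ (FQ n).Adj u x ∧ (FQ n).Adj w x := by
  rw [adj_iff] at hu hw
  obtain ⟨hvu, hua⟩ := hu
  obtain ⟨hvw, hwb⟩ := hw
  have hua' : ∃ a, ((∃ i, a = Pi.single i 1) ∨ a = 1) ∧ u = v + a := by
    rcases hua with ⟨i, hi⟩ | h1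
    · exact ⟨_, Or.inl ⟨i, rfl⟩, hi⟩
    · exact ⟨_, Or.inr rfl, h1⟩
  obtain ⟨a, hPa, rfl⟩ := hua'
  have hwb' : ∃ b, ((∃ i, b = Pi.single i 1) ∨ b = 1) ∧ w = v + b := by
    rcases hwb with ⟨i, hi⟩ | h1
    · exact ⟨_, Or.inl ⟨i, rfl⟩, hi⟩
    · exact ⟨_, Or.inr rfl, h1⟩
  obtain ⟨b, hPb, rfl⟩ := hwb'
  have hab : a ≠ b := fun hh => huw (by rw [hh])
  have hanz : a ≠ 0 := Pnz hn hPa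
  have hbnz : b ≠ 0 := Pnz hn hPb
  refine ⟨v + a + b, ⟨?_, ?_, ?_⟩, ?_⟩
  · -- v + a + b ≠ v
    intro hh
    have hab0 : a + b = 0 := by
      rwa [add_assoc, add_eq_left] at hh
    have : a = b := by
      have h2 := addself b
      linear_combination hab0 - h2
    exact hab this
  · -- Adj u x₀
    rw [adj_iff]
    constructor
    · intro hh
      exact hbnz (left_eq_add.mp hh)
    · rcases hPb with ⟨i, rfl⟩ | rfl
      · exact Or.inl ⟨i, rfl⟩
      · exact Or.inr rfl
  · -- Adj w x₀
    rw [adj_iff]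
    constructor
    · intro hh
      rw [add_assoc, add_comm a b, ← add_assoc] at hh
      exact hanz (left_eq_add.mp hh)
    · have heq : v + a + b = (v + b) + a := by ring
      rw [heq]
      rcases hPa with ⟨i, rfl⟩ | rfl
      · exact Or.inl ⟨i, rfl⟩
      · exact Or.inr rfl
  · -- uniqueness
    rintro y ⟨hyv, hyu, hyw⟩
    rw [adj_iff] at hyu hyw
    obtain ⟨hyune, hyuc⟩ := hyu
    obtain ⟨hywne, hywd⟩ := hyw
    have hc' : ∃ c, ((∃ i, c = Pi.single i 1) ∨ c = 1) ∧ y = (v + a) + c := by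
      rcases hyuc with ⟨i, hi⟩ | h1
      · exact ⟨_, Or.inl ⟨i, rfl⟩, hi⟩
      · exact ⟨_, Or.inr rfl, h1⟩
    obtain ⟨c, hPc, hcdef⟩ := hc'
    have hd' : ∃ d, ((∃ i, d = Pi.single i 1) ∨ d = 1) ∧ y = (v + b) + d := by
      rcases hywd with ⟨i, hi⟩ | h1
      · exact ⟨_, Or.inl ⟨i, rfl⟩, hi⟩
      · exact ⟨_, Or.inr rfl, h1⟩
    obtain ⟨d, hPd, hddef⟩ := hd'
    have hcd : c ≠ d := by
      intro hh
      subst hh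
      apply huw
      have := hcdef.symm.trans hddef
      exact add_right_cancel this
    have hsum : a + b = c + d := by
      have h := hcdef.symm.trans hddef
      linear_combination h + addself b - addself c
    rcases key hn hPa hPb hPc hPd hab hcd hsum with ⟨hca, hdb⟩ | ⟨hcb, hda⟩
    · exfalso
      apply hyv
      rw [hcdef, hca, add_assoc, addself, add_zero]
    · rw [hcdef, hcb]
end

section
/- For n > 3, the stabilizer of any vertex v in Aut(FQ_n) has order at most (n+1)!. -/
namespace FQaux

abbrev V (n : ℕ) := Fin n → ZMod 2

variable {n : ℕ}

lemma add_self (x : V n) : x + x = 0 := by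
  ext i; exact (by decide : ∀ a : ZMod 2, a + a = 0) (x i)

lemma zmod2_cases (a : ZMod 2) : a = 0 ∨ a = 1 := by revert a; decide

lemma flip_eq {x y s : V n} (h : x = y + s) : y = x + s := by
  rw [h, add_assoc, add_self, add_zero]

/-- weight -/
def wt (x : V n) : ℕ := (Finset.univ.filter (fun i => x i = 1)).card

/-- folded weight -/
def fv (n : ℕ) (x : V n) : ℕ := min (wt x) (n + 1 - wt x)

lemma wt_le (x : V n) : wt x ≤ n := by
  have := Finset.card_filter_le (Finset.univ : Finset (Fin n)) (fun i => x i = 1)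
  simpa [wt] using this

lemma wt_zero : wt (0 : V n) = 0 := by
  simp [wt]

lemma wt_one : wt (1 : V n) = n := by
  simp [wt, Finset.filter_true_of_mem]

lemma wt_eq_zero {x : V n} (h : wt x = 0) : x = 0 := by
  ext i
  rcases zmod2_cases (x i) with h0 | h1
  · simpa using h0
  · exfalso
    have hi : i ∈ Finset.univ.filter (fun i => x i = 1) := by simp [h1]
    rw [Finset.card_eq_zero.mp h] at hi
    simp at hi

lemma wt_single (i : Fin n) : wt (Pi.single i 1 : V n) = 1 := by
  have : Finset.univ.filter (fun j => (Pi.single i 1 : V n) j = 1) = {i} := by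
    ext j
    by_cases hj : j = i
    · subst hj; simp
    · simp [Pi.single_eq_of_ne hj, hj]
  simp [wt, this]

lemma wt_eq_one {x : V n} (h : wt x = 1) : ∃ i, x = Pi.single i 1 := by
  obtain ⟨i, hi⟩ := Finset.card_eq_one.mp h
  refine ⟨i, ?_⟩
  ext j
  by_cases hj : j = i
  · subst hj
    have : j ∈ Finset.univ.filter (fun k => x k = 1) := by rw [hi]; simp
    simp only [Finset.mem_filter] at this
    simp [this.2]
  · have : j ∉ Finset.univ.filter (fun k => x k = 1) := by rw [hi]; simp [hj]
    simp only [Finset.mem_filter, Finset.mem_univ, true_and] at this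
    rcases zmod2_cases (x j) with h0 | h1
    · simp [h0, Pi.single_eq_of_ne hj]
    · exact absurd h1 this

lemma wt_eq_n {x : V n} (h : wt x = n) : x = 1 := by
  have huniv : Finset.univ.filter (fun i => x i = 1) = Finset.univ := by
    apply Finset.eq_univ_of_card
    simpa [wt] using h
  ext i
  have : i ∈ Finset.univ.filter (fun j => x j = 1) :=
    Finset.eq_univ_iff_forall.mp huniv i
  simp only [Finset.mem_filter] at this
  simp [this.2]

lemma zero_filter_card (x : V n) :
    (Finset.univ.filter (fun i => x i = 0)).card = n - wt x := by
  have h1 : (Finset.univ.filter (fun i => x i = 0)) =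
      (Finset.univ.filter (fun i => ¬ (x i = 1))) := by
    apply Finset.filter_congr
    intro i _
    rcases zmod2_cases (x i) with h0 | h1
    · simp [h0]
    · simp [h1]
  have h2 := Finset.card_filter_add_card_filter_not
    (s := (Finset.univ : Finset (Fin n))) (fun i => x i = 1)
  rw [h1]
  have : wt x + (Finset.univ.filter (fun i => ¬ (x i = 1))).card = n := by
    simpa [wt] using h2
  omega

lemma wt_add_single_one {x : V n} {i : Fin n} (h : x i = 1) :
    wt (x + Pi.single i 1) = wt x - 1 := by
  have hset : Finset.univ.filter (fun j => (x + Pi.single i 1 : V n) j = 1) =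
      (Finset.univ.filter (fun j => x j = 1)).erase i := by
    ext j
    by_cases hj : j = i
    · subst hj
      simp [h, (by decide : (1 : ZMod 2) + 1 ≠ 1)]
    · simp [Pi.single_eq_of_ne hj, hj]
  have hi : i ∈ Finset.univ.filter (fun j => x j = 1) := by simp [h]
  rw [wt, hset, Finset.card_erase_of_mem hi]
  rfl

lemma wt_add_single_zero {x : V n} {i : Fin n} (h : x i = 0) :
    wt (x + Pi.single i 1) = wt x + 1 := by
  have hset : Finset.univ.filter (fun j => (x + Pi.single i 1 : V n) j = 1) =
      insert i (Finset.univ.filter (fun j => x j = 1)) := by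
    ext j
    by_cases hj : j = i
    · subst hj
      simp [h]
    · simp [Pi.single_eq_of_ne hj, hj]
  have hi : i ∉ Finset.univ.filter (fun j => x j = 1) := by
    simp [h, (by decide : (0 : ZMod 2) ≠ 1)]
  rw [wt, hset, Finset.card_insert_of_notMem hi]
  rfl

lemma wt_pred {x : V n} (hn : 0 < n) (h : wt x = n - 1) :
    ∃ i, x = 1 + Pi.single i 1 := by
  have hz : (Finset.univ.filter (fun i => x i = 0)).card = 1 := by
    rw [zero_filter_card, h]; omega
  obtain ⟨i, hi⟩ := Finset.card_eq_one.mp hz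
  refine ⟨i, ?_⟩
  ext j
  by_cases hj : j = i
  · subst hj
    have : j ∈ Finset.univ.filter (fun k => x k = 0) := by rw [hi]; simp
    simp only [Finset.mem_filter] at this
    simp [this.2, (by decide : (1 : ZMod 2) + 1 = 0)]
  · have : j ∉ Finset.univ.filter (fun k => x k = 0) := by rw [hi]; simp [hj]
    simp only [Finset.mem_filter, Finset.mem_univ, true_and] at this
    rcases zmod2_cases (x j) with h0 | h1
    · exact absurd h0 this
    · simp [h1, Pi.single_eq_of_ne hj]

lemma exists_ne3 (hn : 3 < n) (i j k : Fin n) :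
    ∃ m : Fin n, m ≠ i ∧ m ≠ j ∧ m ≠ k := by
  by_contra hcon
  push_neg at hcon
  have hsub : (Finset.univ : Finset (Fin n)) ⊆ {i, j, k} := by
    intro m _
    by_cases h1 : m = i
    · simp [h1]
    · by_cases h2 : m = j
      · simp [h2]
      · simp [hcon m h1 h2]
  have h3 : ({i, j, k} : Finset (Fin n)).card ≤ 3 := by
    apply le_trans (Finset.card_insert_le _ _)
    have := Finset.card_insert_le j ({k} : Finset (Fin n))
    simp at this ⊢
    omega
  have := Finset.card_le_card hsub
  simp at this
  omega

lemma adj_iff {x y : V n} : (FQ n).Adj x y ↔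
    x ≠ y ∧ ((∃ i, y = x + Pi.single i 1) ∨ y = x + 1) := by
  rw [FQ, SimpleGraph.fromRel_adj]
  constructor
  · rintro ⟨hne, h | h⟩
    · exact ⟨hne, h⟩
    · refine ⟨hne, ?_⟩
      rcases h with ⟨i, hi⟩ | h1
      · exact Or.inl ⟨i, flip_eq hi⟩
      · exact Or.inr (flip_eq h1)
  · rintro ⟨hne, h⟩; exact ⟨hne, Or.inl h⟩

lemma single_ne_zero (i : Fin n) : (Pi.single i 1 : V n) ≠ 0 := by
  intro h
  have := congrFun h i
  simp at this

lemma adj_single (x : V n) (i : Fin n) : (FQ n).Adj x (x + Pi.single i 1) := by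
  rw [adj_iff]
  refine ⟨?_, Or.inl ⟨i, rfl⟩⟩
  intro h
  exact single_ne_zero i (left_eq_add.mp h)

lemma adj_one (hn : 0 < n) (x : V n) : (FQ n).Adj x (x + 1) := by
  rw [adj_iff]
  refine ⟨?_, Or.inr rfl⟩
  intro h
  have h0 := left_eq_add.mp h
  have := congrFun h0 ⟨0, hn⟩
  simp at this

lemma cancel_assoc {x a b : V n} (h : x + a = x + b) : a = b := add_left_cancel h

lemma single_pair {i k j l : Fin n} (hij : i ≠ j)
    (h : (Pi.single i 1 : V n) + Pi.single k 1 = Pi.single j 1 + Pi.single l 1) :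
    (k = i ∧ l = j) ∨ (k = j ∧ l = i) := by
  by_cases hk : k = i
  · subst hk
    -- LHS = 0, so e_j = e_l? evaluate at j
    left
    refine ⟨rfl, ?_⟩
    by_contra hlj
    have := congrFun h j
    simp [Pi.single_eq_of_ne (Ne.symm hij), Pi.single_eq_of_ne (Ne.symm hlj)] at this
  · -- k ≠ i : evaluate at i gives l = i
    have hli : l = i := by
      by_contra hli
      have := congrFun h i
      simp [Pi.single_eq_of_ne (fun hh : i = k => hk hh.symm), Pi.single_eq_of_ne hij,
        Pi.single_eq_of_ne (fun hh : i = l => hli hh.symm)] at this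
    subst hli
    have hkj : k = j := by
      by_contra hkj
      have := congrFun h k
      simp [Pi.single_eq_of_ne hk, Pi.single_eq_of_ne hkj, Pi.single_eq_same] at this
    exact Or.inr ⟨hkj, rfl⟩

/-- no solution to `e_i + e_k = e_j + 1` when `n > 3`. -/
lemma no_mix (hn : 3 < n) {i k j : Fin n}
    (h : (Pi.single i 1 : V n) + Pi.single k 1 = Pi.single j 1 + 1) : False := by
  obtain ⟨m, hmi, hmj, hmk⟩ := exists_ne3 hn i j k
  have := congrFun h m
  simp [Pi.single_eq_of_ne hmi, Pi.single_eq_of_ne hmj, Pi.single_eq_of_ne hmk] at this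

lemma single_inj {i j : Fin n} (h : (Pi.single i 1 : V n) = Pi.single j 1) : i = j := by
  by_contra hij
  have := congrFun h i
  simp [Pi.single_eq_of_ne (fun hh : i = j => hij hh)] at this

/-- common neighbors of `x+e_i` and `x+e_j` (`i ≠ j`) are `x` and `x+e_i+e_j`. -/
lemma cn1 (hn : 3 < n) {x z : V n} {i j : Fin n} (hij : i ≠ j)
    (ha : (FQ n).Adj (x + Pi.single i 1) z) (hb : (FQ n).Adj (x + Pi.single j 1) z) :
    z = x ∨ z = x + Pi.single i 1 + Pi.single j 1 := by
  rw [adj_iff] at ha hb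
  obtain ⟨-, ha⟩ := ha
  obtain ⟨-, hb⟩ := hb
  rcases ha with ⟨k, hk⟩ | ha1
  · rcases hb with ⟨l, hl⟩ | hb1
    · have key : (Pi.single i 1 : V n) + Pi.single k 1 = Pi.single j 1 + Pi.single l 1 := by
        have h0 := hk.symm.trans hl
        rw [add_assoc, add_assoc] at h0
        exact cancel_assoc h0
      rcases single_pair hij key with ⟨hki, -⟩ | ⟨hkj, -⟩
      · left
        rw [hk, hki, add_assoc, add_self, add_zero]
      · right
        rw [hk, hkj]
    · exfalso
      have key : (Pi.single i 1 : V n) + Pi.single k 1 = Pi.single j 1 + 1 := by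
        have h0 := hk.symm.trans hb1
        rw [add_assoc, add_assoc] at h0
        exact cancel_assoc h0
      exact no_mix hn key
  · rcases hb with ⟨l, hl⟩ | hb1
    · exfalso
      have key : (Pi.single j 1 : V n) + Pi.single l 1 = Pi.single i 1 + 1 := by
        have h0 := hl.symm.trans ha1
        rw [add_assoc, add_assoc] at h0
        exact cancel_assoc h0
      exact no_mix hn key
    · exfalso
      have key : (Pi.single i 1 : V n) + 1 = Pi.single j 1 + 1 := by
        have h0 := ha1.symm.trans hb1
        rw [add_assoc, add_assoc] at h0
        exact cancel_assoc h0
      exact hij (single_inj (add_right_cancel key))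

/-- common neighbors of `x+1` and `x+e_i` are `x` and `x+1+e_i` (`n > 3`). -/
lemma cn2 (hn : 3 < n) {x z : V n} {i : Fin n}
    (ha : (FQ n).Adj (x + 1) z) (hb : (FQ n).Adj (x + Pi.single i 1) z) :
    z = x ∨ z = x + 1 + Pi.single i 1 := by
  rw [adj_iff] at ha hb
  obtain ⟨-, ha⟩ := ha
  obtain ⟨-, hb⟩ := hb
  rcases ha with ⟨k, hk⟩ | ha1
  · rcases hb with ⟨l, hl⟩ | hb1
    · exfalso
      have key : (1 : V n) + Pi.single k 1 = Pi.single i 1 + Pi.single l 1 := by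
        have h0 := hk.symm.trans hl
        rw [add_assoc, add_assoc] at h0
        exact cancel_assoc h0
      obtain ⟨m, hmi, hmk, hml⟩ := exists_ne3 hn i k l
      have := congrFun key m
      simp [Pi.single_eq_of_ne hmi, Pi.single_eq_of_ne hmk, Pi.single_eq_of_ne hml] at this
    · have key : (1 : V n) + Pi.single k 1 = Pi.single i 1 + 1 := by
        have h0 := hk.symm.trans hb1
        rw [add_assoc, add_assoc] at h0
        exact cancel_assoc h0
      have hk' : (Pi.single k 1 : V n) = Pi.single i 1 := by
        have : (Pi.single k 1 : V n) + 1 = Pi.single i 1 + 1 := by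
          rw [← key, add_comm]
        exact add_right_cancel this
      right
      rw [hk, hk']
  · left
    rw [ha1, add_assoc, add_self, add_zero]

lemma fix_all (hn : 3 < n) (φ : FQ n ≃g FQ n) (h0 : φ 0 = 0)
    (hs : ∀ i : Fin n, φ (Pi.single i 1) = Pi.single i 1)
    (h1 : φ (1 : V n) = 1) : ∀ x, φ x = x := by
  have hadj : ∀ a x : V n, (FQ n).Adj a x → (FQ n).Adj (φ a) (φ x) :=
    fun a x h => φ.map_rel_iff.mpr h
  have key : ∀ m (x : V n), fv n x ≤ m → φ x = x := by
    intro m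
    induction m with
    | zero =>
      intro x hx
      have h00 : min (wt x) (n + 1 - wt x) = 0 := Nat.le_zero.mp hx
      have hwle := wt_le x
      rcases Nat.min_eq_zero_iff.mp h00 with h | h
      · rw [wt_eq_zero h, h0]
      · exact absurd h (by omega)
    | succ m ih =>
      intro x hx
      rcases Nat.lt_or_ge (fv n x) (m + 1) with hlt | hge
      · exact ih x (by omega)
      have hfx : fv n x = m + 1 := le_antisymm hx hge
      have IH : ∀ y : V n, fv n y < fv n x → φ y = y := fun y hy => ih y (by omega)
      have hwle := wt_le x
      by_cases hw : wt x ≤ n + 1 - wt x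
      · -- fv x = wt x = m+1
        have hwm : wt x = m + 1 := by
          have : fv n x = wt x := min_eq_left hw
          omega
        by_cases hm : m = 0
        · -- wt x = 1
          obtain ⟨i, rfl⟩ := wt_eq_one (x := x) (by omega)
          exact hs i
        · -- wt x ≥ 2
          have h2 : 1 < (Finset.univ.filter (fun i => x i = 1)).card := by
            have : (Finset.univ.filter (fun i => x i = 1)).card = wt x := rfl
            omega
          obtain ⟨i, hi, j, hj, hij⟩ := Finset.one_lt_card.mp h2
          simp only [Finset.mem_filter, Finset.mem_univ, true_and] at hi hj
          have haj : (x + Pi.single i 1 : V n) j = 1 := by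
            simp [Pi.single_eq_of_ne (Ne.symm hij), hj]
          have hwa : wt (x + Pi.single i 1) = wt x - 1 := wt_add_single_one hi
          have hwb : wt (x + Pi.single j 1) = wt x - 1 := wt_add_single_one hj
          have hwz : wt (x + Pi.single i 1 + Pi.single j 1) = wt x - 2 := by
            rw [wt_add_single_one haj, hwa]
            omega
          have hfa : φ (x + Pi.single i 1) = x + Pi.single i 1 := by
            apply IH
            calc fv n (x + Pi.single i 1) ≤ wt (x + Pi.single i 1) := min_le_left _ _
              _ < fv n x := by omega
          have hfb : φ (x + Pi.single j 1) = x + Pi.single j 1 := by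
            apply IH
            calc fv n (x + Pi.single j 1) ≤ wt (x + Pi.single j 1) := min_le_left _ _
              _ < fv n x := by omega
          have hza : (FQ n).Adj (x + Pi.single i 1) (φ x) := by
            have := hadj _ _ ((adj_single x i).symm)
            rwa [hfa] at this
          have hzb : (FQ n).Adj (x + Pi.single j 1) (φ x) := by
            have := hadj _ _ ((adj_single x j).symm)
            rwa [hfb] at this
          rcases cn1 hn hij hza hzb with h | h
          · exact h
          · exfalso
            have hz : φ (x + Pi.single i 1 + Pi.single j 1)
                = x + Pi.single i 1 + Pi.single j 1 := by
              apply IH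
              calc fv n _ ≤ wt (x + Pi.single i 1 + Pi.single j 1) := min_le_left _ _
                _ < fv n x := by omega
            have hxz : x = x + Pi.single i 1 + Pi.single j 1 :=
              φ.toEquiv.injective (h.trans hz.symm)
            rw [add_assoc] at hxz
            have h0' := left_eq_add.mp hxz
            have := congrFun h0' i
            simp [Pi.single_eq_of_ne hij] at this
      · -- fv x = n + 1 - wt x = m+1, and wt x > n+1-wt x
        push_neg at hw
        have hwm : wt x = n - m := by
          have : fv n x = n + 1 - wt x := min_eq_right (le_of_lt hw)
          omega
        by_cases hwn : wt x = n
        · rw [wt_eq_n hwn, h1]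
        by_cases hwn1 : wt x = n - 1
        · -- case 2b
          obtain ⟨i0, rfl⟩ := wt_pred (by omega) hwn1
          set x : V n := 1 + Pi.single i0 1 with hxdef
          have hxa : x + 1 = Pi.single i0 1 := by
            rw [hxdef, add_comm (1 : V n) (Pi.single i0 1), add_assoc, add_self, add_zero]
          have hxb : x + Pi.single i0 1 = 1 := by
            rw [hxdef, add_assoc, add_self, add_zero]
          have hm1 : m = 1 := by omega
          have hfa : φ (x + 1) = x + 1 := by
            apply IH
            rw [hxa]
            have : fv n (Pi.single i0 1 : V n) ≤ 1 := by
              calc fv n _ ≤ wt (Pi.single i0 1 : V n) := min_le_left _ _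
                _ = 1 := wt_single i0
            omega
          have hfb : φ (x + Pi.single i0 1) = x + Pi.single i0 1 := by
            apply IH
            rw [hxb]
            have : fv n (1 : V n) ≤ 1 := by
              have := wt_one (n := n)
              calc fv n (1 : V n) ≤ n + 1 - wt (1 : V n) := min_le_right _ _
                _ = 1 := by omega
            omega
          have hza : (FQ n).Adj (x + 1) (φ x) := by
            have := hadj _ _ ((adj_one (by omega) x).symm)
            rwa [hfa] at this
          have hzb : (FQ n).Adj (x + Pi.single i0 1) (φ x) := by
            have := hadj _ _ ((adj_single x i0).symm)
            rwa [hfb] at this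
          rcases cn2 hn hza hzb with h | h
          · exact h
          · exfalso
            have hz0 : x + 1 + Pi.single i0 1 = 0 := by
              rw [hxa, add_self]
            rw [hz0] at h
            have hx0 : x = 0 := φ.toEquiv.injective (h.trans h0.symm)
            have : wt x = 0 := by rw [hx0, wt_zero]
            omega
        · -- case 2a : wt x ≤ n - 2
          have h2 : 1 < (Finset.univ.filter (fun i => x i = 0)).card := by
            have := zero_filter_card x
            omega
          obtain ⟨i, hi, j, hj, hij⟩ := Finset.one_lt_card.mp h2
          simp only [Finset.mem_filter, Finset.mem_univ, true_and] at hi hj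
          have haj : (x + Pi.single i 1 : V n) j = 0 := by
            simp [Pi.single_eq_of_ne (Ne.symm hij), hj]
          have hwa : wt (x + Pi.single i 1) = wt x + 1 := wt_add_single_zero hi
          have hwb : wt (x + Pi.single j 1) = wt x + 1 := wt_add_single_zero hj
          have hwz : wt (x + Pi.single i 1 + Pi.single j 1) = wt x + 2 := by
            rw [wt_add_single_zero haj, hwa]
          have hwale := wt_le (x + Pi.single i 1)
          have hwzle := wt_le (x + Pi.single i 1 + Pi.single j 1)
          have hfa : φ (x + Pi.single i 1) = x + Pi.single i 1 := by
            apply IH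
            calc fv n (x + Pi.single i 1) ≤ n + 1 - wt (x + Pi.single i 1) :=
                min_le_right _ _
              _ < fv n x := by omega
          have hfb : φ (x + Pi.single j 1) = x + Pi.single j 1 := by
            apply IH
            calc fv n (x + Pi.single j 1) ≤ n + 1 - wt (x + Pi.single j 1) :=
                min_le_right _ _
              _ < fv n x := by omega
          have hza : (FQ n).Adj (x + Pi.single i 1) (φ x) := by
            have := hadj _ _ ((adj_single x i).symm)
            rwa [hfa] at this
          have hzb : (FQ n).Adj (x + Pi.single j 1) (φ x) := by
            have := hadj _ _ ((adj_single x j).symm)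
            rwa [hfb] at this
          rcases cn1 hn hij hza hzb with h | h
          · exact h
          · exfalso
            have hz : φ (x + Pi.single i 1 + Pi.single j 1)
                = x + Pi.single i 1 + Pi.single j 1 := by
              apply IH
              calc fv n _ ≤ n + 1 - wt (x + Pi.single i 1 + Pi.single j 1) :=
                  min_le_right _ _
                _ < fv n x := by omega
            have hxz : x = x + Pi.single i 1 + Pi.single j 1 :=
              φ.toEquiv.injective (h.trans hz.symm)
            rw [add_assoc] at hxz
            have h0' := left_eq_add.mp hxz
            have := congrFun h0' i
            simp [Pi.single_eq_of_ne hij] at this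
  exact fun x => key (fv n x) x le_rfl

/-- translation by `v` as a graph automorphism. -/
def transIso (v : V n) : FQ n ≃g FQ n where
  toEquiv := Equiv.addLeft v
  map_rel_iff' := by
    intro x y
    simp only [Equiv.coe_addLeft]
    rw [adj_iff, adj_iff]
    constructor
    · rintro ⟨hne, h⟩
      refine ⟨fun hxy => hne (by rw [hxy]), ?_⟩
      rcases h with ⟨i, hi⟩ | h1
      · refine Or.inl ⟨i, ?_⟩
        have : v + y = v + (x + Pi.single i 1) := by rw [hi, add_assoc]
        exact add_left_cancel this
      · refine Or.inr ?_
        have : v + y = v + (x + 1) := by rw [h1, add_assoc]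
        exact add_left_cancel this
    · rintro ⟨hne, h⟩
      refine ⟨fun hxy => hne (add_left_cancel hxy), ?_⟩
      rcases h with ⟨i, hi⟩ | h1
      · exact Or.inl ⟨i, by rw [hi, add_assoc]⟩
      · exact Or.inr (by rw [h1, add_assoc])

lemma transIso_apply (v x : V n) : transIso v x = v + x := rfl

/-- the stabilizer injects into permutations of the neighborhood. -/
def toPerm (v : V n) (φ : {φ : FQ n ≃g FQ n // φ v = v}) :
    Equiv.Perm {y : V n // (FQ n).Adj v y} where
  toFun y := ⟨φ.1 y.1, by
    have := φ.1.map_rel_iff.mpr y.2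
    rwa [φ.2] at this⟩
  invFun y := ⟨φ.1.symm y.1, by
    have hv : φ.1.symm v = v := by
      have h2 : φ.1.toEquiv.symm v = v := φ.1.toEquiv.symm_apply_eq.mpr φ.2.symm
      exact h2
    have := φ.1.symm.map_rel_iff.mpr y.2
    rwa [hv] at this⟩
  left_inv y := Subtype.ext (φ.1.toEquiv.symm_apply_apply y.1)
  right_inv y := Subtype.ext (φ.1.toEquiv.apply_symm_apply y.1)

lemma toPerm_injective (hn : 3 < n) (v : V n) :
    Function.Injective (toPerm (n := n) v) := by
  intro φ₁ φ₂ h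
  have hagree : ∀ y : V n, (FQ n).Adj v y → φ₁.1 y = φ₂.1 y := by
    intro y hy
    have := congrFun (congrArg (fun (e : Equiv.Perm {y : V n // (FQ n).Adj v y}) =>
      (e : {y : V n // (FQ n).Adj v y} → {y : V n // (FQ n).Adj v y})) h) ⟨y, hy⟩
    exact congrArg Subtype.val this
  -- the composed automorphism ψ = τ ∘ φ₂⁻¹ ∘ φ₁ ∘ τ fixes 0 and its neighborhood
  set τ := transIso v with hτ
  set ψ : FQ n ≃g FQ n := τ.trans (φ₁.1.trans (φ₂.1.symm.trans τ)) with hψ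
  have hψ_apply : ∀ x : V n, ψ x = v + (φ₂.1.symm (φ₁.1 (v + x))) := by
    intro x
    rfl
  have hsymm : ∀ y : V n, φ₁.1 y = φ₂.1 y → φ₂.1.symm (φ₁.1 y) = y := by
    intro y hy
    rw [hy]
    exact φ₂.1.toEquiv.symm_apply_apply y
  have hfix0 : ψ 0 = 0 := by
    rw [hψ_apply, add_zero, hsymm v (by rw [φ₁.2, φ₂.2]), add_self]
  have hfixs : ∀ i : Fin n, ψ (Pi.single i 1) = Pi.single i 1 := by
    intro i
    rw [hψ_apply, hsymm (v + Pi.single i 1) (hagree _ (adj_single v i)),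
      ← add_assoc, add_self, zero_add]
  have hfix1 : ψ (1 : V n) = 1 := by
    rw [hψ_apply, hsymm (v + 1) (hagree _ (adj_one (by omega) v)),
      ← add_assoc, add_self, zero_add]
  have hall := fix_all hn ψ hfix0 hfixs hfix1
  have heq : ∀ y : V n, φ₁.1 y = φ₂.1 y := by
    intro y
    have := hall (v + y)
    rw [hψ_apply, ← add_assoc, add_self, zero_add] at this
    have h2 : φ₂.1.symm (φ₁.1 y) = y := add_left_cancel this
    have := congrArg φ₂.1 h2
    rwa [show (φ₂.1 : V n → V n) (φ₂.1.symm (φ₁.1 y)) =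
      φ₂.1.toEquiv (φ₂.1.toEquiv.symm (φ₁.1 y)) from rfl,
      φ₂.1.toEquiv.apply_symm_apply] at this
  apply Subtype.ext
  exact RelIso.ext heq

lemma nbhd_card_le (hn : 3 < n) (v : V n) :
    Nat.card {y : V n // (FQ n).Adj v y} ≤ n + 1 := by
  have hsurj : Function.Surjective (fun o : Option (Fin n) =>
      (match o with
        | some i => ⟨v + Pi.single i 1, adj_single v i⟩
        | none => ⟨v + 1, adj_one (by omega) v⟩ :
        {y : V n // (FQ n).Adj v y})) := by
    rintro ⟨y, hy⟩
    rw [adj_iff] at hy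
    rcases hy.2 with ⟨i, hi⟩ | h1
    · exact ⟨some i, Subtype.ext hi.symm⟩
    · exact ⟨none, Subtype.ext h1.symm⟩
  have := Nat.card_le_card_of_surjective _ hsurj
  calc Nat.card {y : V n // (FQ n).Adj v y} ≤ Nat.card (Option (Fin n)) := this
    _ = n + 1 := by simp

end FQaux

theorem fq_stabilizer_card_le (n : ℕ) (hn : 3 < n) (v : Fin n → ZMod 2) :
    Nat.card {φ : FQ n ≃g FQ n // φ v = v} ≤ (n + 1).factorial := by
  classical
  have h1 : Nat.card {φ : FQ n ≃g FQ n // φ v = v}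
      ≤ Nat.card (Equiv.Perm {y : Fin n → ZMod 2 // (FQ n).Adj v y}) :=
    Nat.card_le_card_of_injective _ (FQaux.toPerm_injective hn v)
  letI : Fintype {y : Fin n → ZMod 2 // (FQ n).Adj v y} := Fintype.ofFinite _
  have h2 : Nat.card (Equiv.Perm {y : Fin n → ZMod 2 // (FQ n).Adj v y})
      = (Nat.card {y : Fin n → ZMod 2 // (FQ n).Adj v y}).factorial := by
    rw [Nat.card_eq_fintype_card, Nat.card_eq_fintype_card, Fintype.card_perm]
  calc Nat.card {φ : FQ n ≃g FQ n // φ v = v}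
      ≤ Nat.card (Equiv.Perm {y : Fin n → ZMod 2 // (FQ n).Adj v y}) := h1
    _ = (Nat.card {y : Fin n → ZMod 2 // (FQ n).Adj v y}).factorial := h2
    _ ≤ (n + 1).factorial := Nat.factorial_le (FQaux.nbhd_card_le hn v)
end

section
/- For n > 3, the stabilizer in Aut(FQ_n) of the zero vertex, restricted to the neighborhood S = {e_1,...,e_n, e_1+...+e_n} of 0, induces the full symmetric group Sym(S) on the n+1 neighbors of 0. -/
namespace FQAux

variable {n : ℕ}

lemma add_self (x : Fin n → ZMod 2) : x + x = 0 := by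
  funext i
  have h : ∀ a : ZMod 2, a + a = 0 := by decide
  exact h (x i)

lemma eq_add_iff (s z w : Fin n → ZMod 2) : w = z + s ↔ z + w = s := by
  constructor
  · rintro rfl; rw [← add_assoc, add_self, zero_add]
  · rintro rfl; rw [← add_assoc, add_self, zero_add]

lemma fq_adj_iff (S : Set (Fin n → ZMod 2))
    (hS : S = {x | (∃ i : Fin n, x = Pi.single i 1) ∨ x = 1}) (x y : Fin n → ZMod 2) :
    (FQ n).Adj x y ↔ x ≠ y ∧ x + y ∈ S := by
  rw [FQ, SimpleGraph.fromRel_adj, hS]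
  simp only [Set.mem_setOf_eq, eq_add_iff]
  have hcomm : y + x = x + y := add_comm y x
  rw [hcomm]
  tauto

/-- Build a graph automorphism of `FQ n` from an additive equivalence preserving `S`. -/
def fqIso (S : Set (Fin n → ZMod 2))
    (hS : S = {x | (∃ i : Fin n, x = Pi.single i 1) ∨ x = 1})
    (e : (Fin n → ZMod 2) ≃+ (Fin n → ZMod 2))
    (hmap : ∀ v, v ∈ S ↔ e v ∈ S) : FQ n ≃g FQ n where
  toEquiv := e.toEquiv
  map_rel_iff' := by
    intro x y
    simp only [Equiv.toFun_as_coe, AddEquiv.toEquiv_eq_coe, EquivLike.coe_coe]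
    rw [fq_adj_iff S hS, fq_adj_iff S hS, ← map_add]
    constructor
    · rintro ⟨h1, h2⟩
      exact ⟨fun h => h1 (by rw [h]), (hmap _).mpr h2⟩
    · rintro ⟨h1, h2⟩
      exact ⟨fun h => h1 (e.injective h), (hmap _).mp h2⟩

lemma fqIso_apply (S : Set (Fin n → ZMod 2))
    (hS : S = {x | (∃ i : Fin n, x = Pi.single i 1) ∨ x = 1})
    (e : (Fin n → ZMod 2) ≃+ (Fin n → ZMod 2))
    (hmap : ∀ v, v ∈ S ↔ e v ∈ S) (x : Fin n → ZMod 2) :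
    fqIso S hS e hmap x = e x := rfl

lemma mapS_iff (S : Set (Fin n → ZMod 2))
    (e : (Fin n → ZMod 2) ≃+ (Fin n → ZMod 2))
    (h1 : ∀ v ∈ S, e v ∈ S) (h2 : ∀ v ∈ S, e.symm v ∈ S) :
    ∀ v, v ∈ S ↔ e v ∈ S := by
  intro v
  constructor
  · exact h1 v
  · intro h
    have := h2 _ h
    rwa [e.symm_apply_apply] at this

/-- Coordinate permutation as an additive equivalence. -/
def permAddEquiv (π : Equiv.Perm (Fin n)) :
    (Fin n → ZMod 2) ≃+ (Fin n → ZMod 2) where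
  toFun x := x ∘ π.symm
  invFun x := x ∘ π
  left_inv x := by funext j; simp
  right_inv x := by funext j; simp
  map_add' x y := rfl

lemma permAddEquiv_single (π : Equiv.Perm (Fin n)) (i : Fin n) :
    permAddEquiv π (Pi.single i 1) = Pi.single (π i) 1 := by
  funext j
  simp only [permAddEquiv, AddEquiv.coe_mk, Equiv.coe_fn_mk, Function.comp_apply]
  rw [Pi.single_apply, Pi.single_apply]
  by_cases h : j = π i
  · subst h; simp
  · rw [if_neg h, if_neg]
    intro hi
    exact h (by rw [← hi]; simp)

lemma permAddEquiv_one (π : Equiv.Perm (Fin n)) :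
    permAddEquiv π (1 : Fin n → ZMod 2) = 1 := rfl

lemma permAddEquiv_symm_apply (π : Equiv.Perm (Fin n)) (x : Fin n → ZMod 2) :
    (permAddEquiv π).symm x = x ∘ π := rfl

/-- the vector `1 + e_i`. -/
def flipVec (i : Fin n) : Fin n → ZMod 2 := 1 + Pi.single i 1

lemma flipVec_apply_self (i : Fin n) : flipVec i i = 0 := by
  have h1 : (1 : ZMod 2) + 1 = 0 := by decide
  simp [flipVec, h1]

/-- The "flip" automorphism swapping `e_i` and the all-ones vector. -/
def flipAddEquiv (i : Fin n) : (Fin n → ZMod 2) ≃+ (Fin n → ZMod 2) where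
  toFun x := x + x i • flipVec i
  invFun x := x + x i • flipVec i
  left_inv x := by
    have hz : ∀ a : ZMod 2, a + a = 0 := by decide
    have hxi : (x + x i • flipVec i) i = x i := by
      simp [flipVec_apply_self]
    simp only [hxi]
    rw [add_assoc, ← add_smul, hz, zero_smul, add_zero]
  right_inv x := by
    have hz : ∀ a : ZMod 2, a + a = 0 := by decide
    have hxi : (x + x i • flipVec i) i = x i := by
      simp [flipVec_apply_self]
    simp only [hxi]
    rw [add_assoc, ← add_smul, hz, zero_smul, add_zero]
  map_add' x y := by
    simp only [Pi.add_apply]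
    rw [add_smul]
    abel

lemma flipAddEquiv_apply (i : Fin n) (x : Fin n → ZMod 2) :
    flipAddEquiv i x = x + x i • flipVec i := rfl

lemma flipAddEquiv_symm_apply (i : Fin n) (x : Fin n → ZMod 2) :
    (flipAddEquiv i).symm x = x + x i • flipVec i := rfl

lemma flipAddEquiv_single_self (i : Fin n) :
    flipAddEquiv i (Pi.single i 1) = 1 := by
  rw [flipAddEquiv_apply]
  have h : (Pi.single i 1 : Fin n → ZMod 2) i = 1 := by simp
  rw [h, one_smul, flipVec]
  have hz : ∀ a : ZMod 2, a + a = 0 := by decide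
  funext j
  simp only [Pi.add_apply, Pi.one_apply]
  rw [add_comm (Pi.single i 1 j), add_assoc, hz, add_zero]

lemma flipAddEquiv_single_ne (i k : Fin n) (hk : k ≠ i) :
    flipAddEquiv i (Pi.single k 1) = Pi.single k 1 := by
  rw [flipAddEquiv_apply]
  have h : (Pi.single k 1 : Fin n → ZMod 2) i = 0 := by
    simp [Pi.single_apply, (Ne.symm hk)]
  rw [h, zero_smul, add_zero]

lemma flipAddEquiv_one (i : Fin n) :
    flipAddEquiv i (1 : Fin n → ZMod 2) = Pi.single i 1 := by
  rw [flipAddEquiv_apply]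
  have h : (1 : Fin n → ZMod 2) i = 1 := rfl
  rw [h, one_smul, flipVec, ← add_assoc]
  have hz : (1 : Fin n → ZMod 2) + 1 = 0 := by
    funext j
    simp only [Pi.add_apply, Pi.one_apply, Pi.zero_apply]
    decide
  rw [hz, zero_add]

variable (S : Set (Fin n → ZMod 2))

lemma single_index_inj {i k : Fin n}
    (h : (Pi.single i 1 : Fin n → ZMod 2) = Pi.single k 1) : i = k := by
  by_contra hik
  have h2 := congrFun h i
  rw [Pi.single_apply, Pi.single_apply, if_pos rfl, if_neg hik] at h2
  exact absurd h2 (by decide)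

lemma single_ne_one (hn : 1 < n) (i : Fin n) :
    (Pi.single i 1 : Fin n → ZMod 2) ≠ 1 := by
  haveI : Nontrivial (Fin n) :=
    ⟨⟨⟨0, by omega⟩, ⟨1, by omega⟩, by simp [Fin.ext_iff]⟩⟩
  obtain ⟨j, hj⟩ := exists_ne i
  intro h
  have h2 := congrFun h j
  rw [Pi.single_apply, if_neg hj, Pi.one_apply] at h2
  exact absurd h2 (by decide)

lemma permS (hS : S = {x | (∃ i : Fin n, x = Pi.single i 1) ∨ x = 1})
    (π : Equiv.Perm (Fin n)) : ∀ v ∈ S, permAddEquiv π v ∈ S := by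
  intro v hv
  rw [hS] at hv ⊢
  rcases hv with ⟨i, rfl⟩ | rfl
  · exact Or.inl ⟨π i, permAddEquiv_single π i⟩
  · exact Or.inr (permAddEquiv_one π)

lemma permS_iff (hS : S = {x | (∃ i : Fin n, x = Pi.single i 1) ∨ x = 1})
    (π : Equiv.Perm (Fin n)) : ∀ v, v ∈ S ↔ permAddEquiv π v ∈ S := by
  apply mapS_iff
  · exact permS S hS π
  · intro v hv
    have heq : (permAddEquiv π).symm v = permAddEquiv π.symm v := by
      rw [permAddEquiv_symm_apply]
      show v ∘ ⇑π = v ∘ ⇑π.symm.symm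
      rw [Equiv.symm_symm]
    rw [heq]
    exact permS S hS π.symm v hv

lemma flipS (hS : S = {x | (∃ i : Fin n, x = Pi.single i 1) ∨ x = 1})
    (i : Fin n) : ∀ v ∈ S, flipAddEquiv i v ∈ S := by
  intro v hv
  rw [hS] at hv ⊢
  rcases hv with ⟨k, rfl⟩ | rfl
  · by_cases hk : k = i
    · subst hk
      exact Or.inr (flipAddEquiv_single_self k)
    · rw [flipAddEquiv_single_ne i k hk]
      exact Or.inl ⟨k, rfl⟩
  · rw [flipAddEquiv_one]
    exact Or.inl ⟨i, rfl⟩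

lemma flipS_iff (hS : S = {x | (∃ i : Fin n, x = Pi.single i 1) ∨ x = 1})
    (i : Fin n) : ∀ v, v ∈ S ↔ flipAddEquiv i v ∈ S := by
  apply mapS_iff
  · exact flipS S hS i
  · intro v hv
    rw [flipAddEquiv_symm_apply, ← flipAddEquiv_apply]
    exact flipS S hS i v hv

/-- The subgroup of permutations of `S` induced by automorphisms of `FQ n` fixing `0`. -/
def stabPerms : Subgroup (Equiv.Perm S) where
  carrier := {τ | ∃ φ : FQ n ≃g FQ n, φ 0 = 0 ∧ ∀ s (hs : s ∈ S), φ s = τ ⟨s, hs⟩}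
  one_mem' := ⟨RelIso.refl _, rfl, fun s hs => rfl⟩
  mul_mem' := by
    rintro τ₁ τ₂ ⟨φ₁, h₁0, h₁⟩ ⟨φ₂, h₂0, h₂⟩
    refine ⟨(φ₂.trans φ₁ : FQ n ≃g FQ n), ?_, ?_⟩
    · show φ₁ (φ₂ 0) = 0
      rw [h₂0, h₁0]
    · intro s hs
      show φ₁ (φ₂ s) = _
      rw [h₂ s hs]
      have := h₁ (τ₂ ⟨s, hs⟩) (τ₂ ⟨s, hs⟩).2
      rw [this]
      rfl
  inv_mem' := by
    rintro τ ⟨φ, h0, h⟩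
    refine ⟨φ.symm, ?_, ?_⟩
    · conv_lhs => rw [← h0]
      exact φ.symm_apply_apply 0
    · intro s hs
      have key := h (τ⁻¹ ⟨s, hs⟩).1 (τ⁻¹ ⟨s, hs⟩).2
      have : (τ ⟨((τ⁻¹ ⟨s, hs⟩ : S) : Fin n → ZMod 2), (τ⁻¹ ⟨s, hs⟩).2⟩ : S) = ⟨s, hs⟩ := by
        rw [Subtype.coe_eta]
        exact τ.apply_symm_apply ⟨s, hs⟩
      rw [this] at key
      have key' : φ ((τ⁻¹ ⟨s, hs⟩ : S) : Fin n → ZMod 2) = s := key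
      conv_lhs => rw [← key']
      exact φ.symm_apply_apply _

lemma mem_stabPerms_iff (τ : Equiv.Perm S) :
    τ ∈ stabPerms S ↔
      ∃ φ : FQ n ≃g FQ n, φ 0 = 0 ∧ ∀ s (hs : s ∈ S), φ s = τ ⟨s, hs⟩ := Iff.rfl

lemma swap_singles_mem (hS : S = {x | (∃ i : Fin n, x = Pi.single i 1) ∨ x = 1})
    (hn : 1 < n) (a b : S) (i j : Fin n)
    (hai : (a : Fin n → ZMod 2) = Pi.single i 1)
    (hbj : (b : Fin n → ZMod 2) = Pi.single j 1) :
    Equiv.swap a b ∈ stabPerms S := by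
  by_cases hij : i = j
  · have hab : a = b := Subtype.ext (by rw [hai, hbj, hij])
    subst hab
    have h1 : Equiv.swap a a = 1 := Equiv.swap_self a
    rw [h1]
    exact (stabPerms S).one_mem
  rw [mem_stabPerms_iff]
  refine ⟨fqIso S hS (permAddEquiv (Equiv.swap i j)) (permS_iff S hS _), ?_, ?_⟩
  · show permAddEquiv (Equiv.swap i j) 0 = 0
    exact map_zero _
  · intro s hs
    rw [fqIso_apply]
    have hsS := hs
    rw [hS] at hsS
    rcases hsS with ⟨k, rfl⟩ | rfl
    · rw [permAddEquiv_single]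
      by_cases hk : k = i
      · subst hk
        have ha' : (⟨Pi.single k 1, hs⟩ : S) = a := Subtype.ext hai.symm
        rw [ha']
        simp only [Equiv.swap_apply_left]
        exact hbj.symm
      · by_cases hk' : k = j
        · subst hk'
          have hb' : (⟨Pi.single k 1, hs⟩ : S) = b := Subtype.ext hbj.symm
          rw [hb']
          simp only [Equiv.swap_apply_right]
          exact hai.symm
        · have hka : (⟨Pi.single k 1, hs⟩ : S) ≠ a := fun h =>
            hk (single_index_inj ((congrArg Subtype.val h).trans hai))
          have hkb : (⟨Pi.single k 1, hs⟩ : S) ≠ b := fun h =>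
            hk' (single_index_inj ((congrArg Subtype.val h).trans hbj))
          rw [Equiv.swap_apply_of_ne_of_ne hk hk',
            Equiv.swap_apply_of_ne_of_ne hka hkb]
    · rw [permAddEquiv_one]
      have h1a : (⟨(1 : Fin n → ZMod 2), hs⟩ : S) ≠ a := fun h => by
        have h2 := (congrArg Subtype.val h).trans hai
        exact single_ne_one hn i h2.symm
      have h1b : (⟨(1 : Fin n → ZMod 2), hs⟩ : S) ≠ b := fun h => by
        have h2 := (congrArg Subtype.val h).trans hbj
        exact single_ne_one hn j h2.symm
      rw [Equiv.swap_apply_of_ne_of_ne h1a h1b]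

lemma swap_single_one_mem (hS : S = {x | (∃ i : Fin n, x = Pi.single i 1) ∨ x = 1})
    (hn : 1 < n) (a b : S) (i : Fin n)
    (hai : (a : Fin n → ZMod 2) = Pi.single i 1)
    (hb1 : (b : Fin n → ZMod 2) = 1) :
    Equiv.swap a b ∈ stabPerms S := by
  rw [mem_stabPerms_iff]
  refine ⟨fqIso S hS (flipAddEquiv i) (flipS_iff S hS i), ?_, ?_⟩
  · show flipAddEquiv i 0 = 0
    exact map_zero _
  · intro s hs
    rw [fqIso_apply]
    have hsS := hs
    rw [hS] at hsS
    rcases hsS with ⟨k, rfl⟩ | rfl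
    · by_cases hk : k = i
      · subst hk
        rw [flipAddEquiv_single_self]
        have ha' : (⟨Pi.single k 1, hs⟩ : S) = a := Subtype.ext hai.symm
        rw [ha', Equiv.swap_apply_left]
        exact hb1.symm
      · rw [flipAddEquiv_single_ne i k hk]
        have hka : (⟨Pi.single k 1, hs⟩ : S) ≠ a := fun h =>
          hk (single_index_inj ((congrArg Subtype.val h).trans hai))
        have hkb : (⟨Pi.single k 1, hs⟩ : S) ≠ b := fun h =>
          single_ne_one hn k ((congrArg Subtype.val h).trans hb1)
        rw [Equiv.swap_apply_of_ne_of_ne hka hkb]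
    · rw [flipAddEquiv_one]
      have hb' : (⟨(1 : Fin n → ZMod 2), hs⟩ : S) = b := Subtype.ext hb1.symm
      rw [hb', Equiv.swap_apply_right]
      exact hai.symm

end FQAux

theorem fq_stabilizer_induces_full_sym (n : ℕ) (hn : 3 < n)
    (S : Set (Fin n → ZMod 2))
    (hS : S = {x | (∃ i : Fin n, x = Pi.single i 1) ∨ x = 1}) :
    ∀ σ : Equiv.Perm S, ∃ φ : FQ n ≃g FQ n,
      φ 0 = 0 ∧ ∀ (s : Fin n → ZMod 2) (hs : s ∈ S), φ s = σ ⟨s, hs⟩ := by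
  classical
  intro σ
  have hn1 : 1 < n := by omega
  rw [← FQAux.mem_stabPerms_iff]
  have htop : Subgroup.closure {τ : Equiv.Perm S | τ.IsSwap} ≤ FQAux.stabPerms S := by
    rw [Subgroup.closure_le]
    rintro τ ⟨a, b, hab, rfl⟩
    obtain ⟨va, hva⟩ := a
    obtain ⟨vb, hvb⟩ := b
    have ha := hva
    have hb := hvb
    rw [hS] at ha hb
    rcases ha with ⟨i, hai⟩ | ha1 <;> rcases hb with ⟨j, hbj⟩ | hb1
    · exact FQAux.swap_singles_mem S hS hn1 ⟨va, hva⟩ ⟨vb, hvb⟩ i j hai hbj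
    · exact FQAux.swap_single_one_mem S hS hn1 ⟨va, hva⟩ ⟨vb, hvb⟩ i hai hb1
    · rw [Equiv.swap_comm]
      exact FQAux.swap_single_one_mem S hS hn1 ⟨vb, hvb⟩ ⟨va, hva⟩ j hbj ha1
    · exact absurd (Subtype.ext (ha1.trans hb1.symm)) hab
  have hclosure := Equiv.Perm.closure_isSwap (α := S)
  exact htop (hclosure ▸ Subgroup.mem_top σ)
end

section
/- For n ≥ 2, the vertex connectivity of the folded hypercube FQ_n equals n+1. -/
section Infra
variable {α : Type*} {G H : SimpleGraph α} {B B' : Set α}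

/-- There is a walk from x to y with all vertices in B. -/
def good (G : SimpleGraph α) (B : Set α) (x y : α) : Prop :=
  ∃ w : G.Walk x y, ∀ v ∈ w.support, v ∈ B

lemma good_refl {x : α} (hx : x ∈ B) : good G B x x :=
  ⟨SimpleGraph.Walk.nil, by simp [hx]⟩

lemma good_symm {x y : α} (h : good G B x y) : good G B y x := by
  obtain ⟨w, hw⟩ := h
  exact ⟨w.reverse, by simpa using hw⟩

lemma good_trans {x y z : α} (h : good G B x y) (h' : good G B y z) : good G B x z := by
  obtain ⟨w, hw⟩ := h; obtain ⟨w', hw'⟩ := h'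
  refine ⟨w.append w', fun v hv => ?_⟩
  rw [SimpleGraph.Walk.mem_support_append_iff] at hv
  exact hv.elim (hw v) (hw' v)

lemma good_adj {x y : α} (h : G.Adj x y) (hx : x ∈ B) (hy : y ∈ B) : good G B x y :=
  ⟨h.toWalk, by simp [hx, hy]⟩

lemma good_mono (hGH : G ≤ H) {x y : α} (h : good G B x y) : good H B x y := by
  obtain ⟨w, hw⟩ := h
  exact ⟨w.mapLe hGH, by simpa [SimpleGraph.Walk.mapLe] using hw⟩

lemma good_subset (hBB : B ⊆ B') {x y : α} (h : good G B x y) : good G B' x y := by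
  obtain ⟨w, hw⟩ := h
  exact ⟨w, fun v hv => hBB (hw v hv)⟩

lemma reach_of_walk {x y : α} (w : G.Walk x y) (hw : ∀ v ∈ w.support, v ∈ B)
    (hx : x ∈ B) (hy : y ∈ B) : (G.induce B).Reachable ⟨x, hx⟩ ⟨y, hy⟩ := by
  induction w with
  | nil => rfl
  | cons h p ih =>
    rename_i u v z
    have hv : v ∈ B := hw v (by simp)
    have h1 : (G.induce B).Adj ⟨u, hx⟩ ⟨v, hv⟩ := h
    exact h1.reachable.trans (ih (fun a ha => hw a (by simp [ha])) hv hy)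

lemma connected_of_good (hne : B.Nonempty)
    (h : ∀ x ∈ B, ∀ y ∈ B, good G B x y) : (G.induce B).Connected := by
  have : Nonempty ↥B := ⟨⟨hne.choose, hne.choose_spec⟩⟩
  rw [SimpleGraph.connected_iff]
  refine ⟨?_, this⟩
  rintro ⟨x, hx⟩ ⟨y, hy⟩
  obtain ⟨w, hw⟩ := h x hx y hy
  exact reach_of_walk w hw hx hy

end Infra

def Q (n : ℕ) : SimpleGraph (Fin n → ZMod 2) :=
  SimpleGraph.fromRel (fun x y => ∃ i, y = x + Pi.single i 1)

variable {n : ℕ}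

lemma add_add_self (x d : Fin n → ZMod 2) : x + d + d = x := by
  have : d + d = 0 := by
    funext j
    exact CharTwo.add_self_eq_zero _
  rw [add_assoc, this, add_zero]

lemma single_ne_zero (i : Fin n) : (Pi.single i 1 : Fin n → ZMod 2) ≠ 0 := by
  intro h
  have := congrFun h i
  simp at this

lemma Q_adj_single (x : Fin n → ZMod 2) (i : Fin n) : (Q n).Adj x (x + Pi.single i 1) := by
  refine ⟨?_, Or.inl ⟨i, rfl⟩⟩
  intro h
  have : (Pi.single i 1 : Fin n → ZMod 2) = 0 := by
    have := congrArg (fun y => y + x) h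
    simpa [add_comm, add_add_self, eq_comm] using this
  exact single_ne_zero i this

lemma Q_le_FQ : Q n ≤ FQ n := by
  intro x y h
  obtain ⟨hne, h | h⟩ := h
  · exact ⟨hne, Or.inl (Or.inl h)⟩
  · exact ⟨hne, Or.inr (Or.inl h)⟩

def cube (S : Finset (Fin n)) (z : Fin n → ZMod 2) : Set (Fin n → ZMod 2) :=
  {x | ∀ i ∉ S, x i = z i}

noncomputable def cubeEquiv (S : Finset (Fin n)) (z : Fin n → ZMod 2) :
    (cube S z) ≃ (S → ZMod 2) where
  toFun x := fun i => x.1 i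
  invFun g := ⟨fun i => if h : i ∈ S then g ⟨i, h⟩ else z i, fun i hi => by simp [hi]⟩
  left_inv x := by
    ext i
    by_cases h : i ∈ S
    · simp [h]
    · simp [h, x.2 i h]
  right_inv g := by
    ext i
    simp [i.2]

lemma cube_ncard (S : Finset (Fin n)) (z : Fin n → ZMod 2) :
    (cube S z).ncard = 2 ^ S.card := by
  have := Nat.card_congr (cubeEquiv S z)
  rw [Nat.card_coe_set_eq] at this
  rw [this, Nat.card_eq_fintype_card]
  simp [Fintype.card_fun]

lemma exists_unblocked (A C0 C1 : Set (Fin n → ZMod 2)) (d : Fin n → ZMod 2)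
    (hmap : ∀ x ∈ C0, x + d ∈ C1) (hdisj : ∀ x, x ∈ C0 → x ∈ C1 → False)
    (hcard : (A ∩ C0).ncard + (A ∩ C1).ncard < C0.ncard) :
    ∃ x ∈ C0, x ∉ A ∧ x + d ∉ A := by
  by_contra hcon
  push_neg at hcon
  classical
  set f : (Fin n → ZMod 2) → (Fin n → ZMod 2) := fun x => if x ∈ A then x else x + d with hf
  have hmaps : ∀ x ∈ C0, f x ∈ (A ∩ C0) ∪ (A ∩ C1) := by
    intro x hx
    by_cases h : x ∈ A
    · simp only [hf, if_pos h]
      exact Or.inl ⟨h, hx⟩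
    · simp only [hf, if_neg h]
      exact Or.inr ⟨hcon x hx h, hmap x hx⟩
  have hinj : Set.InjOn f C0 := by
    intro x hx y hy hxy
    by_cases h1 : x ∈ A <;> by_cases h2 : y ∈ A <;> simp [hf, h1, h2] at hxy
    · exact hxy
    · exact absurd (hxy ▸ hmap y hy) (fun hc => hdisj x hx hc)
    · exact absurd (hxy ▸ hmap x hx) (fun hc => hdisj y hy hc)
    · exact hxy
  have := Set.ncard_le_ncard_of_injOn f hmaps hinj (Set.toFinite _)
  have hle := Set.ncard_union_le (A ∩ C0) (A ∩ C1)
  omega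

lemma lt_two_pow_pred (m : ℕ) (hm : 3 ≤ m) : m < 2 ^ (m - 1) := by
  induction m with
  | zero => omega
  | succ k ih =>
    rcases Nat.lt_or_ge k 3 with h | h
    · interval_cases k <;> simp_all
    · have := ih (by omega)
      have hk : 2 ^ k = 2 * 2 ^ (k - 1) := by
        rw [← pow_succ']
        congr 1
        omega
      simp only [Nat.succ_sub_one]
      omega

lemma cube_update (S : Finset (Fin n)) (z : Fin n → ZMod 2) {i : Fin n} (hi : i ∈ S)
    (b : ZMod 2) :
    cube (S.erase i) (Function.update z i b) = {x ∈ cube S z | x i = b} := by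
  ext x
  constructor
  · intro h
    have hxi : x i = b := by
      have := h i (by simp)
      simpa using this
    refine ⟨fun j hj => ?_, hxi⟩
    have hji : j ≠ i := fun hji => hj (hji ▸ hi)
    have := h j (by simp [hj, hji])
    simpa [Function.update_of_ne hji] using this
  · rintro ⟨hc, hb⟩ j hj
    by_cases hji : j = i
    · subst hji
      simpa using hb
    · have hjS : j ∉ S := fun hjS => hj (Finset.mem_erase.mpr ⟨hji, hjS⟩)
      simpa [Function.update_of_ne hji] using hc j hjS

lemma zmod2_cases (a : ZMod 2) : a = 0 ∨ a = 1 := by revert a; decide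

lemma subcube_conn (S : Finset (Fin n)) :
    ∀ (z : Fin n → ZMod 2) (A : Set (Fin n → ZMod 2)),
      ((A ∩ cube S z).ncard < S.card ∨ A ∩ cube S z = ∅) →
      ∀ x ∈ cube S z \ A, ∀ y ∈ cube S z \ A, good (Q n) (cube S z \ A) x y := by
  induction S using Finset.strongInduction with
  | _ S ih =>
    intro z A hA x hx y hy
    rcases S.eq_empty_or_nonempty with rfl | hSne
    · have hx' : x = z := funext fun j => hx.1 j (by simp)
      have hy' : y = z := funext fun j => hy.1 j (by simp)
      rw [hy'] at hy ⊢
      rw [hx'] at hx ⊢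
      exact good_refl hx
    · obtain ⟨i, hi⟩ := hSne
      set S' := S.erase i with hS'
      have hSS : S' ⊂ S := Finset.erase_ssubset hi
      set s : Fin n → ZMod 2 := Pi.single i 1 with hs
      set C0 := cube S' (Function.update z i 0) with hC0
      set C1 := cube S' (Function.update z i 1) with hC1
      have hC0' : C0 = {x ∈ cube S z | x i = 0} := cube_update S z hi 0
      have hC1' : C1 = {x ∈ cube S z | x i = 1} := cube_update S z hi 1
      have hcover : ∀ u, u ∈ cube S z → u ∈ C0 ∨ u ∈ C1 := by
        intro u hu
        rcases zmod2_cases (u i) with h | h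
        · exact Or.inl (by rw [hC0']; exact ⟨hu, h⟩)
        · exact Or.inr (by rw [hC1']; exact ⟨hu, h⟩)
      have hdisj : ∀ u, u ∈ C0 → u ∈ C1 → False := by
        intro u h0 h1
        rw [hC0'] at h0; rw [hC1'] at h1
        have := h0.2.symm.trans h1.2
        simp at this
      have hsub0 : C0 ⊆ cube S z := by rw [hC0']; exact fun u hu => hu.1
      have hsub1 : C1 ⊆ cube S z := by rw [hC1']; exact fun u hu => hu.1
      have key : ∀ (b : ZMod 2) (u : Fin n → ZMod 2),
          (∀ j ∉ S, u j = z j) → u i = b → u + s ∈ {x ∈ cube S z | x i = b + 1} := by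
        intro b u hu hui
        constructor
        · intro j hj
          have hji : j ≠ i := fun e => hj (e ▸ hi)
          have : (u + s) j = u j := by simp [hs, Pi.single_eq_of_ne hji]
          rw [this]
          exact hu j hj
        · simp [hs, hui]
      have hadd0 : ∀ u ∈ C0, u + s ∈ C1 := by
        intro u hu
        rw [hC0'] at hu
        rw [hC1']
        have := key 0 u hu.1 hu.2
        simpa using this
      have hadd1 : ∀ u ∈ C1, u + s ∈ C0 := by
        intro u hu
        rw [hC1'] at hu
        rw [hC0']
        have := key 1 u hu.1 hu.2
        have h11 : (1 + 1 : ZMod 2) = 0 := by decide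
        rw [h11] at this
        exact this
      -- the helper for the unbalanced / empty cases
      have main : ∀ (D0 D1 : Set (Fin n → ZMod 2)),
          A ∩ D1 = ∅ → (∀ u ∈ D0, u + s ∈ D1) →
          D0 ⊆ cube S z → D1 ⊆ cube S z → (∀ u ∈ cube S z, u ∈ D0 ∨ u ∈ D1) →
          (∀ p ∈ D1 \ A, ∀ q ∈ D1 \ A, good (Q n) (D1 \ A) p q) →
          good (Q n) (cube S z \ A) x y := by
        intro D0 D1 hD1e hmap hsub0' hsub1' hcov hgood1
        have hsubB : D1 \ A ⊆ cube S z \ A := fun u hu => ⟨hsub1' hu.1, hu.2⟩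
        have lift : ∀ u ∈ cube S z \ A, ∃ u', (u' ∈ D1 \ A) ∧ good (Q n) (cube S z \ A) u u' := by
          intro u hu
          rcases hcov u hu.1 with h | h
          · have hus : u + s ∈ D1 := hmap u h
            have husA : u + s ∉ A := fun hc =>
              Set.eq_empty_iff_forall_notMem.mp hD1e (u + s) ⟨hc, hus⟩
            refine ⟨u + s, ⟨hus, husA⟩, ?_⟩
            exact good_adj (by rw [hs]; exact Q_adj_single u i) hu ⟨hsub1' hus, husA⟩
          · exact ⟨u, ⟨h, hu.2⟩, good_refl hu⟩
        obtain ⟨x', hx', gx⟩ := lift x hx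
        obtain ⟨y', hy', gy⟩ := lift y hy
        exact good_trans gx (good_trans (good_subset hsubB (hgood1 x' hx' y' hy')) (good_symm gy))
      by_cases h1 : A ∩ C1 = ∅
      · exact main C0 C1 h1 hadd0 hsub0 hsub1 hcover
          (ih S' hSS (Function.update z i 1) A (Or.inr h1))
      by_cases h0 : A ∩ C0 = ∅
      · exact main C1 C0 h0 hadd1 hsub1 hsub0 (fun u hu => (hcover u hu).symm)
          (ih S' hSS (Function.update z i 0) A (Or.inr h0))
      -- balanced case
      have hAsplit : A ∩ cube S z = (A ∩ C0) ∪ (A ∩ C1) := by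
        ext u
        constructor
        · rintro ⟨huA, huc⟩
          rcases hcover u huc with h | h
          · exact Or.inl ⟨huA, h⟩
          · exact Or.inr ⟨huA, h⟩
        · rintro (⟨huA, huc⟩ | ⟨huA, huc⟩)
          · exact ⟨huA, hsub0 huc⟩
          · exact ⟨huA, hsub1 huc⟩
      have hdisj2 : Disjoint (A ∩ C0) (A ∩ C1) := by
        rw [Set.disjoint_left]
        rintro u ⟨_, h0'⟩ ⟨_, h1'⟩
        exact hdisj u h0' h1'
      have hAne : (A ∩ cube S z) ≠ ∅ := by
        rw [hAsplit]
        intro hc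
        exact h0 (by rw [← Set.subset_empty_iff]; intro u hu; rw [← hc]; exact Or.inl hu)
      have hcardlt : (A ∩ cube S z).ncard < S.card := hA.resolve_right hAne
      have hsum : (A ∩ C0).ncard + (A ∩ C1).ncard = (A ∩ cube S z).ncard := by
        rw [hAsplit, Set.ncard_union_eq hdisj2 (Set.toFinite _) (Set.toFinite _)]
      have hScard : S.card = S'.card + 1 := by
        rw [hS', Finset.card_erase_of_mem hi]
        have : 1 ≤ S.card := Finset.card_pos.mpr ⟨i, hi⟩
        omega
      have h0pos : 1 ≤ (A ∩ C0).ncard :=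
        (Set.ncard_pos (Set.toFinite _)).mpr (Set.nonempty_iff_ne_empty.mpr h0)
      have h1pos : 1 ≤ (A ∩ C1).ncard :=
        (Set.ncard_pos (Set.toFinite _)).mpr (Set.nonempty_iff_ne_empty.mpr h1)
      have hC0card : C0.ncard = 2 ^ S'.card := cube_ncard S' _
      obtain ⟨w, hw0, hwA, hwsA⟩ := exists_unblocked A C0 C1 s hadd0 hdisj (by
        have := Nat.lt_two_pow_self (n := S'.card)
        omega)
      have g0 := ih S' hSS (Function.update z i 0) A (Or.inl (by
        rw [← hC0]; omega))
      have g1 := ih S' hSS (Function.update z i 1) A (Or.inl (by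
        rw [← hC1]; omega))
      have hsubB0 : C0 \ A ⊆ cube S z \ A := fun u hu => ⟨hsub0 hu.1, hu.2⟩
      have hsubB1 : C1 \ A ⊆ cube S z \ A := fun u hu => ⟨hsub1 hu.1, hu.2⟩
      have hws1 : w + s ∈ C1 := hadd0 w hw0
      have reachw : ∀ u ∈ cube S z \ A, good (Q n) (cube S z \ A) u w := by
        intro u hu
        rcases hcover u hu.1 with h | h
        · exact good_subset hsubB0 (g0 u ⟨h, hu.2⟩ w ⟨hw0, hwA⟩)
        · refine good_trans (good_subset hsubB1 (g1 u ⟨h, hu.2⟩ (w + s) ⟨hws1, hwsA⟩)) ?_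
          exact good_symm (good_adj (by rw [hs]; exact Q_adj_single w i)
            ⟨hsub0 hw0, hwA⟩ ⟨hsub1 hws1, hwsA⟩)
      exact good_trans (reachw x hx) (good_symm (reachw y hy))

lemma FQ_adj_one (hn : 1 ≤ n) (x : Fin n → ZMod 2) : (FQ n).Adj x (x + 1) := by
  refine ⟨?_, Or.inl (Or.inr rfl)⟩
  intro h
  have := congrFun h ⟨0, by omega⟩
  simp at this

lemma part1_ge3 (hn : 3 ≤ n) (A : Set (Fin n → ZMod 2)) (hA : A.ncard ≤ n) :
    ∀ x ∈ Aᶜ, ∀ y ∈ Aᶜ, good (FQ n) Aᶜ x y := by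
  set i0 : Fin n := ⟨0, by omega⟩ with hi0
  set j1 : Fin n := ⟨1, by omega⟩ with hj1
  have hij : j1 ≠ i0 := by simp [hi0, hj1, Fin.ext_iff]
  set s : Fin n → ZMod 2 := Pi.single i0 1 with hs
  have hs1 : s ≠ 1 := by
    intro h
    have := congrFun h j1
    simp [hs, Pi.single_eq_of_ne hij] at this
  set S' : Finset (Fin n) := Finset.univ.erase i0 with hS'
  have hS'card : S'.card = n - 1 := by
    rw [hS', Finset.card_erase_of_mem (Finset.mem_univ i0)]
    simp
  set C0 := cube S' (Function.update 0 i0 (0 : ZMod 2)) with hC0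
  set C1 := cube S' (Function.update 0 i0 (1 : ZMod 2)) with hC1
  have hmem : ∀ (b : ZMod 2) (x : Fin n → ZMod 2),
      x ∈ cube S' (Function.update 0 i0 b) ↔ x i0 = b := by
    intro b x
    constructor
    · intro h
      have := h i0 (by simp [hS'])
      simpa using this
    · intro hb j hj
      have hji : j = i0 := by
        by_contra hc
        exact hj (by simp [hS', hc])
      subst hji
      simpa using hb
  have hmem0 : ∀ x, x ∈ C0 ↔ x i0 = 0 := fun x => hmem 0 x
  have hmem1 : ∀ x, x ∈ C1 ↔ x i0 = 1 := fun x => hmem 1 x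
  have hcover : ∀ u, u ∈ C0 ∨ u ∈ C1 := by
    intro u
    rcases zmod2_cases (u i0) with h | h
    · exact Or.inl ((hmem0 u).mpr h)
    · exact Or.inr ((hmem1 u).mpr h)
  have hdisj : ∀ u, u ∈ C0 → u ∈ C1 → False := by
    intro u h0 h1
    rw [hmem0] at h0; rw [hmem1] at h1
    rw [h0] at h1
    simp at h1
  have hadd0 : ∀ u ∈ C0, u + s ∈ C1 := by
    intro u hu
    rw [hmem0] at hu; rw [hmem1]
    simp [hs, hu]
  have hadd1 : ∀ u ∈ C1, u + s ∈ C0 := by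
    intro u hu
    rw [hmem1] at hu; rw [hmem0]
    simp [hs, hu]
    decide
  have hone0 : ∀ u ∈ C0, u + 1 ∈ C1 := by
    intro u hu
    rw [hmem0] at hu; rw [hmem1]
    simp [hu]
  have hone1 : ∀ u ∈ C1, u + 1 ∈ C0 := by
    intro u hu
    rw [hmem1] at hu; rw [hmem0]
    simp [hu]
    decide
  have hAsplit : A = (A ∩ C0) ∪ (A ∩ C1) := by
    ext u
    constructor
    · intro hu
      rcases hcover u with h | h
      · exact Or.inl ⟨hu, h⟩
      · exact Or.inr ⟨hu, h⟩
    · rintro (⟨hu, _⟩ | ⟨hu, _⟩) <;> exact hu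
  have hdisj2 : Disjoint (A ∩ C0) (A ∩ C1) := by
    rw [Set.disjoint_left]
    rintro u ⟨_, h0'⟩ ⟨_, h1'⟩
    exact hdisj u h0' h1'
  have hsum : (A ∩ C0).ncard + (A ∩ C1).ncard = A.ncard := by
    conv_rhs => rw [hAsplit]
    rw [Set.ncard_union_eq hdisj2 (Set.toFinite _) (Set.toFinite _)]
  have hsubB0 : C0 \ A ⊆ Aᶜ := fun u hu => hu.2
  have hsubB1 : C1 \ A ⊆ Aᶜ := fun u hu => hu.2
  have hQadj : ∀ u : Fin n → ZMod 2, (FQ n).Adj u (u + s) := by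
    intro u
    rw [hs]
    exact Q_le_FQ (Q_adj_single u i0)
  -- symmetric helper for the unbalanced case
  have mainTop : ∀ D0 D1 : Set (Fin n → ZMod 2),
      (∀ u ∈ D0, u + s ∈ D1) → (∀ u ∈ D0, u + 1 ∈ D1) → (∀ u, u ∈ D0 ∨ u ∈ D1) →
      (A ∩ D1).ncard ≤ 1 →
      (∀ p ∈ D1 \ A, ∀ q ∈ D1 \ A, good (Q n) (D1 \ A) p q) →
      ∀ x ∈ Aᶜ, ∀ y ∈ Aᶜ, good (FQ n) Aᶜ x y := by
    intro D0 D1 hm1 hm2 hcov hcard hgood x hx y hy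
    have hsubB : D1 \ A ⊆ Aᶜ := fun u hu => hu.2
    have lift : ∀ u ∈ Aᶜ, ∃ u', (u' ∈ D1 \ A) ∧ good (FQ n) Aᶜ u u' := by
      intro u hu
      rcases hcov u with h | h
      · by_cases hsA : u + s ∈ A
        · have h1A : u + 1 ∉ A := by
            intro h1A
            have : 1 < (A ∩ D1).ncard := by
              rw [Set.one_lt_ncard (Set.toFinite _)]
              refine ⟨u + s, ⟨hsA, hm1 u h⟩, u + 1, ⟨h1A, hm2 u h⟩, ?_⟩
              intro hc
              exact hs1 (add_left_cancel hc)
            omega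
          exact ⟨u + 1, ⟨hm2 u h, h1A⟩, good_adj (FQ_adj_one (by omega) u) hu h1A⟩
        · exact ⟨u + s, ⟨hm1 u h, hsA⟩, good_adj (hQadj u) hu hsA⟩
      · exact ⟨u, ⟨h, hu⟩, good_refl hu⟩
    obtain ⟨x', hx', gx⟩ := lift x hx
    obtain ⟨y', hy', gy⟩ := lift y hy
    exact good_trans gx (good_trans
      (good_subset hsubB (good_mono Q_le_FQ (hgood x' hx' y' hy'))) (good_symm gy))
  intro x hx y hy
  by_cases hbal : (A ∩ C0).ncard ≤ n - 2 ∧ (A ∩ C1).ncard ≤ n - 2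
  · -- balanced case
    obtain ⟨hb0, hb1⟩ := hbal
    have g0 := subcube_conn S' (Function.update 0 i0 (0 : ZMod 2)) A
      (Or.inl (by rw [← hC0, hS'card]; omega))
    have g1 := subcube_conn S' (Function.update 0 i0 (1 : ZMod 2)) A
      (Or.inl (by rw [← hC1, hS'card]; omega))
    have hC0card : C0.ncard = 2 ^ S'.card := cube_ncard S' _
    obtain ⟨w, hw0, hwA, hwsA⟩ := exists_unblocked A C0 C1 s hadd0 hdisj (by
      have h2 := lt_two_pow_pred n hn
      rw [hC0card, hS'card]
      omega)
    have hws1 : w + s ∈ C1 := hadd0 w hw0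
    have reachw : ∀ u ∈ Aᶜ, good (FQ n) Aᶜ u w := by
      intro u hu
      rcases hcover u with h | h
      · exact good_subset hsubB0 (good_mono Q_le_FQ (g0 u ⟨h, hu⟩ w ⟨hw0, hwA⟩))
      · refine good_trans
          (good_subset hsubB1 (good_mono Q_le_FQ (g1 u ⟨h, hu⟩ (w + s) ⟨hws1, hwsA⟩))) ?_
        exact good_symm (good_adj (hQadj w) hwA hwsA)
    exact good_trans (reachw x hx) (good_symm (reachw y hy))
  · -- unbalanced case
    rcases not_and_or.mp hbal with hbig | hbig
    ·
      have h1small : (A ∩ C1).ncard ≤ 1 := by omega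
      exact mainTop C0 C1 hadd0 hone0 hcover h1small
        (subcube_conn S' (Function.update 0 i0 (1 : ZMod 2)) A
          (Or.inl (by rw [← hC1, hS'card]; omega))) x hx y hy
    · have h0small : (A ∩ C0).ncard ≤ 1 := by omega
      exact mainTop C1 C0 hadd1 hone1 (fun u => (hcover u).symm) h0small
        (subcube_conn S' (Function.update 0 i0 (0 : ZMod 2)) A
          (Or.inl (by rw [← hC0, hS'card]; omega))) x hx y hy

lemma fq2_complete : ∀ x y : Fin 2 → ZMod 2, x ≠ y →
    (∃ i, y = x + Pi.single i 1) ∨ y = x + 1 := by decide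

lemma fq2_sub : ∀ x : Fin 2 → ZMod 2, ¬((∃ i, x = Pi.single i 1) ∨ x = 1) → x = 0 := by
  decide

lemma Acompl_nonempty (A : Set (Fin n → ZMod 2)) (hA : A.ncard < 2 ^ n) : Aᶜ.Nonempty := by
  rw [Set.nonempty_iff_ne_empty]
  intro hc
  have hAu : A = Set.univ := by
    rwa [Set.compl_empty_iff] at hc
  rw [hAu, Set.ncard_univ, Nat.card_eq_fintype_card] at hA
  simp [Fintype.card_fun] at hA

lemma no_reach {α : Type*} (G : SimpleGraph α) (a b : α) (h : ∀ c, ¬ G.Adj a c)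
    (hab : a ≠ b) : ¬ G.Reachable a b := by
  intro hr
  obtain ⟨w⟩ := hr
  cases w with
  | nil => exact hab rfl
  | cons h' p => exact h _ h'

set_option maxHeartbeats 2000000 in
/-- The vertex connectivity of FQ_n is n+1: removing fewer than n+1 vertices leaves
a connected graph, while some set of n+1 vertices leaves a graph that is disconnected
or has at most one vertex. -/
theorem fq_connectivity (n : ℕ) (hn : 2 ≤ n) :
    (∀ A : Set (Fin n → ZMod 2), A.ncard < n + 1 →
        ((FQ n).induce Aᶜ).Connected) ∧
    (∃ A : Set (Fin n → ZMod 2), A.ncard = n + 1 ∧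
        (¬ ((FQ n).induce Aᶜ).Connected ∨ Aᶜ.Subsingleton)) := by
  constructor
  · intro A hA
    have h2n : (n : ℕ) < 2 ^ n := Nat.lt_two_pow_self (n := n)
    have hne : Aᶜ.Nonempty := Acompl_nonempty A (by omega)
    rcases eq_or_lt_of_le hn with h2 | h3
    · -- n = 2 : FQ 2 is complete
      subst h2
      refine connected_of_good hne ?_
      intro x hx y hy
      rcases eq_or_ne x y with rfl | hxy
      · exact good_refl hx
      · exact good_adj ⟨hxy, Or.inl (fq2_complete x y hxy)⟩ hx hy
    · exact connected_of_good hne (part1_ge3 h3 A (by omega))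
  · -- the neighborhood of 0
    classical
    set AF : Finset (Fin n → ZMod 2) :=
      (Finset.univ.image fun i : Fin n => (Pi.single i 1 : Fin n → ZMod 2)) ∪ {1} with hAF
    set A : Set (Fin n → ZMod 2) := ↑AF with hA
    have hmemA : ∀ y, y ∈ A ↔ (∃ i, y = Pi.single i 1) ∨ y = 1 := by
      intro y
      simp [hA, hAF, eq_comm]
      tauto
    have hsinj : Function.Injective fun i : Fin n => (Pi.single i 1 : Fin n → ZMod 2) := by
      intro i j h
      by_contra hij
      have h' : (Pi.single i 1 : Fin n → ZMod 2) = Pi.single j 1 := h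
      have this2 := congrFun h' i
      rw [Pi.single_eq_same, Pi.single_eq_of_ne hij] at this2
      exact one_ne_zero this2
    have hone_ne : ∀ i : Fin n, (1 : Fin n → ZMod 2) ≠ Pi.single i 1 := by
      intro i h
      have hjlt : (if i.1 = 0 then 1 else 0) < n := by split <;> omega
      have hji : (⟨if i.1 = 0 then 1 else 0, hjlt⟩ : Fin n) ≠ i := by
        intro hc
        rw [Fin.ext_iff] at hc
        simp only [] at hc
        split at hc <;> omega
      have := congrFun h ⟨if i.1 = 0 then 1 else 0, hjlt⟩
      rw [Pi.single_eq_of_ne hji, Pi.one_apply] at this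
      exact one_ne_zero this
    have hcard : A.ncard = n + 1 := by
      rw [hA, Set.ncard_coe_finset, hAF, Finset.card_union_of_disjoint, Finset.card_image_of_injective _ hsinj]
      · simp
      · simp only [Finset.disjoint_singleton_right, Finset.mem_image]
        rintro ⟨i, -, hi⟩
        exact hone_ne i hi.symm
    refine ⟨A, hcard, ?_⟩
    have hnbr : ∀ y, (FQ n).Adj 0 y → y ∈ A := by
      intro y hy
      obtain ⟨hne, h | h⟩ := hy
      · rcases h with ⟨i, hi⟩ | h1
        · exact (hmemA y).mpr (Or.inl ⟨i, by simpa using hi⟩)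
        · exact (hmemA y).mpr (Or.inr (by simpa using h1))
      · rcases h with ⟨i, hi⟩ | h1
        · refine (hmemA y).mpr (Or.inl ⟨i, ?_⟩)
          have := congrArg (· + Pi.single i 1) hi
          simpa [add_add_self, eq_comm] using this
        · refine (hmemA y).mpr (Or.inr ?_)
          have := congrArg (· + 1) h1
          simpa [add_add_self, eq_comm] using this
    rcases eq_or_lt_of_le hn with h2 | h3
    · -- n = 2 : the complement is a single point
      subst h2
      refine Or.inr ?_
      intro x hx y hy
      rw [Set.mem_compl_iff, hmemA] at hx hy
      rw [fq2_sub x hx, fq2_sub y hy]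
    · -- n ≥ 3 : 0 is isolated but the complement has another vertex
      refine Or.inl ?_
      set i0 : Fin n := ⟨0, by omega⟩ with hi0
      set j1 : Fin n := ⟨1, by omega⟩ with hj1
      set k2 : Fin n := ⟨2, by omega⟩ with hk2
      have hij : i0 ≠ j1 := by simp [hi0, hj1, Fin.ext_iff]
      set v : Fin n → ZMod 2 := Pi.single i0 1 + Pi.single j1 1 with hv
      have hvi0 : v i0 = 1 := by
        rw [hv, Pi.add_apply, Pi.single_eq_same, Pi.single_eq_of_ne hij, add_zero]
      have hvj1 : v j1 = 1 := by
        rw [hv, Pi.add_apply, Pi.single_eq_same, Pi.single_eq_of_ne hij.symm, zero_add]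
      have hvk2 : v k2 = 0 := by
        have h1 : k2 ≠ i0 := by simp [hi0, hk2, Fin.ext_iff]
        have h2 : k2 ≠ j1 := by simp [hj1, hk2, Fin.ext_iff]
        rw [hv, Pi.add_apply, Pi.single_eq_of_ne h1, Pi.single_eq_of_ne h2, add_zero]
      have h0c : (0 : Fin n → ZMod 2) ∈ Aᶜ := by
        rw [Set.mem_compl_iff, hmemA]
        rintro (⟨i, hi⟩ | h1)
        · have := congrFun hi i
          simp at this
        · have := congrFun h1 i0
          simp at this
      have hvc : v ∈ Aᶜ := by
        rw [Set.mem_compl_iff, hmemA]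
        rintro (⟨i, hi⟩ | h1)
        · have hii0 : i = i0 := by
            by_contra hc
            have := congrFun hi i0
            rw [hvi0, Pi.single_eq_of_ne' hc] at this
            exact one_ne_zero this
          have hij1 : i = j1 := by
            by_contra hc
            have := congrFun hi j1
            rw [hvj1, Pi.single_eq_of_ne' hc] at this
            exact one_ne_zero this
          rw [hii0] at hij1
          exact hij hij1
        · have := congrFun h1 k2
          rw [hvk2] at this
          exact one_ne_zero this.symm
      have h0v : (0 : Fin n → ZMod 2) ≠ v := by
        intro h
        have := congrFun h i0
        rw [hvi0] at this
        exact one_ne_zero this.symm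
      intro hconn
      have hreach := hconn.preconnected ⟨0, h0c⟩ ⟨v, hvc⟩
      refine no_reach _ _ _ ?_ ?_ hreach
      · rintro ⟨c, hc⟩ hadj
        exact hc (hnbr c hadj)
      · intro hc
        exact h0v (congrArg Subtype.val hc)
end
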